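/- arXiv:1804.04042 — 4 statements merged into one kernel-verified Lean document; each statement's English description precedes it below -/
import Mathlib

section
/- Let Φ and Ψ be quantum Latin squares of dimension n. Then Φ and Ψ are orthogonal if and only if Φ* and Ψ are orthogonal, where Φ* is the conjugate quantum Latin square with entries |Φ*_ij⟩ obtained by taking the componentwise complex conjugate of |Φ_ij⟩ in the computational basis. (In particular Φ* is again a quantum Latin square.) -/
open scoped ComplexConjugate Kronecker

noncomputable section

/-- A quantum Latin square of dimension `n`: an `n × n` array of vectors of `ℂ^n`
such that every row and every column is an orthonormal basis of `ℂ^n`. -/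
def IsQLS (n : ℕ) (Φ : Fin n → Fin n → EuclideanSpace ℂ (Fin n)) : Prop :=
  (∀ i, Orthonormal ℂ (fun j => Φ i j)) ∧
  (∀ i, Submodule.span ℂ (Set.range fun j => Φ i j) = ⊤) ∧
  (∀ j, Orthonormal ℂ (fun i => Φ i j)) ∧
  (∀ j, Submodule.span ℂ (Set.range fun i => Φ i j) = ⊤)

/-- The tensor (Kronecker) product of two vectors of `ℂ^n`, as a vector of `ℂ^n ⊗ ℂ^n`. -/
def tensorVec {n : ℕ} (u v : EuclideanSpace ℂ (Fin n)) :
    EuclideanSpace ℂ (Fin n × Fin n) :=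
  WithLp.toLp 2 (fun p : Fin n × Fin n => u p.1 * v p.2)

/-- Two quantum Latin squares are orthogonal when the family `|Φ_ij⟩ ⊗ |Ψ_ij⟩` is an
orthonormal basis of `ℂ^n ⊗ ℂ^n`. -/
def QLSOrthogonal {n : ℕ} (Φ Ψ : Fin n → Fin n → EuclideanSpace ℂ (Fin n)) : Prop :=
  Orthonormal ℂ (fun p : Fin n × Fin n => tensorVec (Φ p.1 p.2) (Ψ p.1 p.2)) ∧
  Submodule.span ℂ
    (Set.range fun p : Fin n × Fin n => tensorVec (Φ p.1 p.2) (Ψ p.1 p.2)) = ⊤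

/-- The outer product `|u⟩⟨v|` as a matrix. -/
def outerMat {ι : Type*} (u v : ι → ℂ) : Matrix ι ι ℂ :=
  Matrix.of fun x y => u x * (starRingEnd ℂ) (v y)

/-- The conjugate quantum Latin square: componentwise complex conjugation in the
computational basis. -/
def conjQLS {n : ℕ} (Φ : Fin n → Fin n → EuclideanSpace ℂ (Fin n)) :
    Fin n → Fin n → EuclideanSpace ℂ (Fin n) :=
  fun i j => (WithLp.toLp 2 (fun x => (starRingEnd ℂ) (Φ i j x)) : EuclideanSpace ℂ (Fin n))

lemma inner_conjQLS {n : ℕ} (Φ : Fin n → Fin n → EuclideanSpace ℂ (Fin n))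
    (i j i' j' : Fin n) :
    (inner ℂ (conjQLS Φ i j) (conjQLS Φ i' j') : ℂ)
    = (starRingEnd ℂ) (inner ℂ (Φ i j) (Φ i' j') : ℂ) := by
  simp [PiLp.inner_apply, map_sum, RCLike.inner_apply, conjQLS, mul_comm]

lemma inner_tensorVec {n : ℕ} (u v u' v' : EuclideanSpace ℂ (Fin n)) :
    (inner ℂ (tensorVec u v) (tensorVec u' v') : ℂ)
    = (inner ℂ u u' : ℂ) * (inner ℂ v v' : ℂ) := by
  simp only [PiLp.inner_apply, RCLike.inner_apply, tensorVec, PiLp.toLp_apply]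
  rw [Finset.sum_mul_sum, ← Finset.sum_product']
  apply Finset.sum_congr rfl
  intro p _
  simp [map_mul]
  ring

lemma span_of_on {ι ι' : Type*} [Fintype ι] [Fintype ι'] (h : Fintype.card ι = Fintype.card ι')
    {f : ι → EuclideanSpace ℂ ι'} (hf : Orthonormal ℂ f) :
    Submodule.span ℂ (Set.range f) = ⊤ :=
  hf.linearIndependent.span_eq_top_of_card_eq_finrank'
    (by simp [finrank_euclideanSpace, h])

lemma conj_eq_ite_iff {α : Type*} (z : ℂ) (p q : α) [Decidable (p = q)] :
    ((starRingEnd ℂ) z = if p = q then 1 else 0) ↔ (z = if p = q then 1 else 0) := by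
  constructor <;> intro h
  · apply (starRingEnd ℂ).injective
    rw [h]; split <;> simp
  · rw [h]; split <;> simp

/-- The conjugate `Φ*` of a QLS `Φ` is again a QLS, and `Φ, Ψ` are orthogonal iff
`Φ*, Ψ` are orthogonal. -/
theorem qls_orthogonal_iff_conj_orthogonal (n : ℕ)
    (Φ Ψ : Fin n → Fin n → EuclideanSpace ℂ (Fin n))
    (hΦ : IsQLS n Φ) (hΨ : IsQLS n Ψ) :
    IsQLS n (conjQLS Φ) ∧ (QLSOrthogonal Φ Ψ ↔ QLSOrthogonal (conjQLS Φ) Ψ) := by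
  obtain ⟨h1, h2, h3, h4⟩ := hΦ
  have row : ∀ i, Orthonormal ℂ (fun j => conjQLS Φ i j) := by
    intro i
    rw [orthonormal_iff_ite]
    intro j j'
    rw [inner_conjQLS, conj_eq_ite_iff]
    exact (orthonormal_iff_ite.mp (h1 i)) j j'
  have col : ∀ j, Orthonormal ℂ (fun i => conjQLS Φ i j) := by
    intro j
    rw [orthonormal_iff_ite]
    intro i i'
    rw [inner_conjQLS, conj_eq_ite_iff]
    exact (orthonormal_iff_ite.mp (h3 j)) i i'
  have key : Orthonormal ℂ (fun p : Fin n × Fin n => tensorVec (Φ p.1 p.2) (Ψ p.1 p.2)) ↔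
      Orthonormal ℂ (fun p : Fin n × Fin n => tensorVec (conjQLS Φ p.1 p.2) (Ψ p.1 p.2)) := by
    simp only [orthonormal_iff_ite, inner_tensorVec, inner_conjQLS]
    refine forall_congr' fun p => forall_congr' fun q => ?_
    by_cases h : p = q
    · subst h
      simp only [if_pos rfl]
      rw [inner_self_conj]
    · simp only [if_neg h]
      rw [mul_eq_zero, mul_eq_zero, map_eq_zero]
  refine ⟨⟨row, fun i => span_of_on rfl (row i), col, fun j => span_of_on rfl (col j)⟩, ?_⟩
  constructor
  · rintro ⟨ho, -⟩
    exact ⟨key.mp ho, span_of_on rfl (key.mp ho)⟩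
  · rintro ⟨ho, -⟩
    exact ⟨key.mpr ho, span_of_on rfl (key.mpr ho)⟩
end
end

section
/- Let Φ and Ψ be any two quantum Latin squares of dimension n (no orthogonality assumed). Then ∑_{i,j,p=0}^{n−1} ⟨Φ_ij|Φ_pj⟩ · |Ψ_ij⟩⟨Ψ_pj| ⊗ |i⟩⟨p| equals the identity on ℂ^n ⊗ ℂ^n, and likewise ∑_{i,j,p=0}^{n−1} ⟨Ψ_ij|Ψ_pj⟩ · |Φ_ij⟩⟨Φ_pj| ⊗ |i⟩⟨p| equals the identity on ℂ^n ⊗ ℂ^n. -/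
open scoped ComplexConjugate Kronecker

noncomputable section

lemma key {n : ℕ} (u : Fin n → EuclideanSpace ℂ (Fin n))
    (h1 : Orthonormal ℂ u) (h2 : Submodule.span ℂ (Set.range u) = ⊤) (a c : Fin n) :
    ∑ j, u j a * conj (u j c) = if a = c then 1 else 0 := by
  let b : OrthonormalBasis (Fin n) ℂ (EuclideanSpace ℂ (Fin n)) :=
    OrthonormalBasis.mk h1 (by rw [h2])
  have := b.sum_inner_mul_inner (EuclideanSpace.single a (1:ℂ)) (EuclideanSpace.single c (1:ℂ))
  simp only [EuclideanSpace.inner_single_left, EuclideanSpace.inner_single_right,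
    map_one, one_mul, mul_one, b, OrthonormalBasis.coe_mk] at this
  rw [this]
  simp [EuclideanSpace.single_apply, eq_comm]

lemma main_aux {n : ℕ} (A B : Fin n → Fin n → EuclideanSpace ℂ (Fin n))
    (hcol : ∀ j, Orthonormal ℂ (fun i => A i j))
    (hrow : ∀ i, Orthonormal ℂ (fun j => B i j))
    (hsp : ∀ i, Submodule.span ℂ (Set.range fun j => B i j) = ⊤) :
    ∑ i : Fin n, ∑ j : Fin n, ∑ p : Fin n,
        (inner ℂ (A i j) (A p j) : ℂ) •
          ((outerMat (B i j) (B p j)) ⊗ₖ Matrix.single i p (1 : ℂ)) =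
      (1 : Matrix (Fin n × Fin n) (Fin n × Fin n) ℂ) := by
  have hA : ∀ j i p, (inner ℂ (A i j) (A p j) : ℂ) = if i = p then 1 else 0 :=
    fun j => orthonormal_iff_ite.mp (hcol j)
  ext ⟨a,b⟩ ⟨c,d⟩
  simp only [Matrix.sum_apply, Matrix.smul_apply, Matrix.kroneckerMap_apply, smul_eq_mul,
    outerMat, Matrix.of_apply, hA, Matrix.single, Matrix.one_apply,
    ite_mul, one_mul, zero_mul, mul_ite, mul_one, mul_zero]
  simp only [ite_and, Finset.sum_ite_eq, Finset.sum_ite_eq', Finset.mem_univ, if_true, Prod.mk.injEq, Finset.sum_ite_irrel, Finset.sum_const_zero]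
  rcases eq_or_ne b d with h | h
  · subst h
    rw [if_pos rfl, key (fun j => B b j) (hrow b) (hsp b) a c]
    by_cases hac : a = c <;> simp [hac]
  · simp [h]

/-- For any two QLS `Φ, Ψ` (no orthogonality assumed),
`∑_{i,j,p} ⟨Φ_ij|Φ_pj⟩ |Ψ_ij⟩⟨Ψ_pj| ⊗ |i⟩⟨p| = I` and
`∑_{i,j,p} ⟨Ψ_ij|Ψ_pj⟩ |Φ_ij⟩⟨Φ_pj| ⊗ |i⟩⟨p| = I` on `ℂ^n ⊗ ℂ^n`. -/
theorem qls_partial_trace_identity (n : ℕ)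
    (Φ Ψ : Fin n → Fin n → EuclideanSpace ℂ (Fin n))
    (hΦ : IsQLS n Φ) (hΨ : IsQLS n Ψ) :
    (∑ i : Fin n, ∑ j : Fin n, ∑ p : Fin n,
        (inner ℂ (Φ i j) (Φ p j) : ℂ) •
          ((outerMat (Ψ i j) (Ψ p j)) ⊗ₖ Matrix.single i p (1 : ℂ)) =
      (1 : Matrix (Fin n × Fin n) (Fin n × Fin n) ℂ)) ∧
    (∑ i : Fin n, ∑ j : Fin n, ∑ p : Fin n,
        (inner ℂ (Ψ i j) (Ψ p j) : ℂ) •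
          ((outerMat (Φ i j) (Φ p j)) ⊗ₖ Matrix.single i p (1 : ℂ)) =
      (1 : Matrix (Fin n × Fin n) (Fin n × Fin n) ℂ)) := by
  obtain ⟨hΦr, hΦrs, hΦc, _⟩ := hΦ
  obtain ⟨hΨr, hΨrs, hΨc, _⟩ := hΨ
  exact ⟨main_aux Φ Ψ hΦc hΨr hΨrs, main_aux Ψ Φ hΨc hΦr hΦrs⟩
end
end

section
/- Let Φ, Ψ, Φ′, Ψ′ be quantum Latin squares of dimension n, let U, V be unitary operators on ℂ^n, let (c_ij) and (d_ij) be families of complex numbers of modulus 1, and let σ, τ be permutations of {0,…,n−1} such that |Φ′_ij⟩ = c_ij · U|Φ_{σ(i),τ(j)}⟩ and |Ψ′_ij⟩ = d_ij · V|Ψ_{σ(i),τ(j)}⟩ for all i,j. Then Φ and Ψ are orthogonal if and only if Φ′ and Ψ′ are orthogonal. -/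
open scoped ComplexConjugate Kronecker

noncomputable section

private lemma inner_tensorVec_aux {n : ℕ} (u v u' v' : EuclideanSpace ℂ (Fin n)) :
    inner (𝕜 := ℂ) (tensorVec u v) (tensorVec u' v')
      = inner (𝕜 := ℂ) u u' * inner (𝕜 := ℂ) v v' := by
  simp only [PiLp.inner_apply, RCLike.inner_apply, tensorVec, PiLp.toLp_apply]
  rw [Fintype.sum_prod_type, Finset.sum_mul_sum]
  simp only [map_mul]
  congr 1; ext x; congr 1; ext y; ring

private lemma span_top_of_orthonormal_aux {n : ℕ}
    (f : Fin n × Fin n → EuclideanSpace ℂ (Fin n × Fin n))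
    (hf : Orthonormal ℂ f) :
    Submodule.span ℂ (Set.range f) = ⊤ := by
  apply hf.linearIndependent.span_eq_top_of_card_eq_finrank'
  simp [finrank_euclideanSpace]

private lemma orthonormal_iff_aux (n : ℕ)
    (Φ Ψ Φ' Ψ' : Fin n → Fin n → EuclideanSpace ℂ (Fin n))
    (U V : EuclideanSpace ℂ (Fin n) ≃ₗᵢ[ℂ] EuclideanSpace ℂ (Fin n))
    (c d : Fin n → Fin n → ℂ)
    (hc : ∀ i j, ‖c i j‖ = 1) (hd : ∀ i j, ‖d i j‖ = 1)
    (σ τ : Equiv.Perm (Fin n))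
    (hΦ'def : ∀ i j, Φ' i j = c i j • U (Φ (σ i) (τ j)))
    (hΨ'def : ∀ i j, Ψ' i j = d i j • V (Ψ (σ i) (τ j))) :
    Orthonormal ℂ (fun p : Fin n × Fin n => tensorVec (Φ p.1 p.2) (Ψ p.1 p.2)) ↔
    Orthonormal ℂ (fun p : Fin n × Fin n => tensorVec (Φ' p.1 p.2) (Ψ' p.1 p.2)) := by
  set g : Equiv.Perm (Fin n × Fin n) := Equiv.prodCongr σ τ with hg
  set e : Fin n × Fin n → ℂ := fun p => c p.1 p.2 * d p.1 p.2 with he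
  clear_value e
  have hgap : ∀ p : Fin n × Fin n, g p = (σ p.1, τ p.2) := fun p => rfl
  have hene : ∀ p, e p ≠ 0 := by
    intro p
    have : ‖e p‖ = 1 := by simp [he, map_mul, hc, hd]
    intro h0; rw [h0] at this; simp at this
  have heu : ∀ p, conj (e p) * e p = 1 := by
    intro p
    rw [mul_comm, Complex.mul_conj, Complex.normSq_eq_norm_sq]
    have : ‖e p‖ = 1 := by simp [he, map_mul, hc, hd]
    rw [this]; norm_num
  have key : ∀ p q : Fin n × Fin n,
      inner (𝕜 := ℂ) (tensorVec (Φ' p.1 p.2) (Ψ' p.1 p.2))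
          (tensorVec (Φ' q.1 q.2) (Ψ' q.1 q.2))
        = (conj (e p) * e q) *
          inner (𝕜 := ℂ) (tensorVec (Φ (g p).1 (g p).2) (Ψ (g p).1 (g p).2))
            (tensorVec (Φ (g q).1 (g q).2) (Ψ (g q).1 (g q).2)) := by
    intro p q
    rw [inner_tensorVec_aux, inner_tensorVec_aux, hΦ'def, hΦ'def, hΨ'def, hΨ'def,
      inner_smul_left, inner_smul_right, inner_smul_left, inner_smul_right,
      LinearIsometryEquiv.inner_map_map, LinearIsometryEquiv.inner_map_map,
      hgap, hgap]
    simp only [he, map_mul]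
    ring
  rw [orthonormal_iff_ite, orthonormal_iff_ite]
  constructor
  · intro h p q
    rw [key]
    have hh := h (g p) (g q)
    rw [hh]
    by_cases hpq : p = q
    · subst hpq; simp [heu p]
    · have : g p ≠ g q := fun hgg => hpq (g.injective hgg)
      simp [hpq, this]
  · intro h p q
    have h2 := h (g.symm p) (g.symm q)
    rw [key] at h2
    simp only [Equiv.apply_symm_apply, g.symm.injective.eq_iff] at h2
    by_cases hpq : p = q
    · subst hpq
      rw [if_pos rfl] at h2 ⊢
      have h1 := heu (g.symm p)
      linear_combination h2 - (inner (𝕜 := ℂ) (tensorVec (Φ p.1 p.2) (Ψ p.1 p.2))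
        (tensorVec (Φ p.1 p.2) (Ψ p.1 p.2))) * h1
    · simp only [if_neg hpq] at h2 ⊢
      have hne : conj (e (g.symm p)) * e (g.symm q) ≠ 0 :=
        mul_ne_zero (by simpa using hene (g.symm p)) (hene (g.symm q))
      exact (mul_eq_zero.mp h2).resolve_left hne

/-- Orthogonality of QLS is preserved by equivalences applied with the same pair of
permutations: if `|Φ′_ij⟩ = c_ij U|Φ_{σ(i),τ(j)}⟩` and `|Ψ′_ij⟩ = d_ij V|Ψ_{σ(i),τ(j)}⟩`,
then `Φ, Ψ` are orthogonal iff `Φ′, Ψ′` are orthogonal. -/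
theorem qls_orthogonal_iff_equiv (n : ℕ)
    (Φ Ψ Φ' Ψ' : Fin n → Fin n → EuclideanSpace ℂ (Fin n))
    (hΦ : IsQLS n Φ) (hΨ : IsQLS n Ψ) (hΦ' : IsQLS n Φ') (hΨ' : IsQLS n Ψ')
    (U V : EuclideanSpace ℂ (Fin n) ≃ₗᵢ[ℂ] EuclideanSpace ℂ (Fin n))
    (c d : Fin n → Fin n → ℂ)
    (hc : ∀ i j, ‖c i j‖ = 1) (hd : ∀ i j, ‖d i j‖ = 1)
    (σ τ : Equiv.Perm (Fin n))
    (hΦ'def : ∀ i j, Φ' i j = c i j • U (Φ (σ i) (τ j)))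
    (hΨ'def : ∀ i j, Ψ' i j = d i j • V (Ψ (σ i) (τ j))) :
    QLSOrthogonal Φ Ψ ↔ QLSOrthogonal Φ' Ψ' := by
  simp only [QLSOrthogonal]
  have hiff := orthonormal_iff_aux n Φ Ψ Φ' Ψ' U V c d hc hd σ τ hΦ'def hΨ'def
  constructor
  · rintro ⟨h1, -⟩
    exact ⟨hiff.mp h1, span_top_of_orthonormal_aux _ (hiff.mp h1)⟩
  · rintro ⟨h1, -⟩
    exact ⟨hiff.mpr h1, span_top_of_orthonormal_aux _ (hiff.mpr h1)⟩
end
end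

section
/- Let n ≥ 2. Any family of m mutually orthogonal quantum Latin squares of dimension n satisfies m ≤ n − 1. -/
open scoped ComplexConjugate Kronecker

noncomputable section

lemma sum_le_one_of_pairwise_mul_eq_zero {m : ℕ} (c : Fin m → ℝ)
    (h0 : ∀ k, 0 ≤ c k) (h1 : ∀ k, c k ≤ 1)
    (hp : ∀ k l, k ≠ l → c k * c l = 0) : ∑ k, c k ≤ 1 := by
  by_cases h : ∀ k, c k = 0
  · simp [h]
  · push_neg at h
    obtain ⟨k0, hk0⟩ := h
    have : ∑ k, c k = c k0 := by
      apply Finset.sum_eq_single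
      · intro l _ hl
        have := hp l k0 hl
        rcases mul_eq_zero.mp this with h' | h'
        · exact h'
        · exact absurd h' hk0
      · intro h'; simp at h'
    rw [this]; exact h1 k0


/-- Upper bound: any family of `m` mutually orthogonal quantum Latin squares of
dimension `n ≥ 2` satisfies `m ≤ n - 1`. -/
theorem moqls_upper_bound (n m : ℕ) (hn : 2 ≤ n)
    (Φ : Fin m → Fin n → Fin n → EuclideanSpace ℂ (Fin n))
    (hQLS : ∀ k, IsQLS n (Φ k))
    (hMO : ∀ k l, k ≠ l → QLSOrthogonal (Φ k) (Φ l)) :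
    m ≤ n - 1 := by
  have hn0 : 0 < n := by omega
  haveI : NeZero n := ⟨by omega⟩
  have h01 : (0 : Fin n) ≠ (1 : Fin n) := by
    have : ((0 : Fin n) : ℕ) ≠ ((1 : Fin n) : ℕ) := by
      simp [Fin.val_one', Nat.mod_eq_of_lt (by omega : 1 < n)]
    exact fun h => this (congrArg Fin.val h)
  -- the coefficients
  set c : Fin m → Fin n → ℝ :=
    fun k j => ‖(inner ℂ (Φ k 1 j) (Φ k 0 0) : ℂ)‖ ^ 2 with hc
  -- each row sum is 1 (Parseval)
  have hrow : ∀ k, ∑ j, c k j = 1 := by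
    intro k
    obtain ⟨hon, hsp, _, _⟩ := hQLS k
    set b : OrthonormalBasis (Fin n) ℂ (EuclideanSpace ℂ (Fin n)) :=
      OrthonormalBasis.mk (hon 1) (le_of_eq (hsp 1).symm) with hb
    have hbc : ∀ j, b j = Φ k 1 j := by
      intro j; rw [hb, OrthonormalBasis.coe_mk]
    have := b.sum_inner_mul_inner (Φ k 0 0) (Φ k 0 0)
    have hnorm : (inner ℂ (Φ k 0 0) (Φ k 0 0) : ℂ) = 1 := by
      rw [inner_self_eq_norm_sq_to_K]
      have := (hon 0).1 0
      simp at this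
      rw [this]; norm_num
    rw [hnorm] at this
    have h2 : ∀ j, (inner ℂ (Φ k 0 0) (b j) : ℂ) * (inner ℂ (b j) (Φ k 0 0) : ℂ)
        = ((c k j : ℝ) : ℂ) := by
      intro j
      rw [hbc j, ← inner_conj_symm (Φ k 0 0) (Φ k 1 j), hc]
      simp only []
      rw [Complex.conj_mul']
      push_cast
      ring
    rw [Finset.sum_congr rfl (fun j _ => h2 j)] at this
    have : ((∑ j, c k j : ℝ) : ℂ) = 1 := by push_cast at this ⊢; exact this
    exact_mod_cast this
  have hnonneg : ∀ k j, 0 ≤ c k j := fun k j => by positivity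
  have hle1 : ∀ k j, c k j ≤ 1 := by
    intro k j
    obtain ⟨hon, _, hcol, _⟩ := hQLS k
    have h1 : ‖Φ k 1 j‖ = 1 := by
      have := (hon 1).1 j; simpa using this
    have h2 : ‖Φ k 0 0‖ = 1 := by
      have := (hon 0).1 0; simpa using this
    have := norm_inner_le_norm (𝕜 := ℂ) (Φ k 1 j) (Φ k 0 0)
    rw [h1, h2] at this
    calc c k j ≤ 1 ^ 2 := by rw [hc]; exact pow_le_pow_left₀ (norm_nonneg _) (by simpa using this) 2
    _ = 1 := one_pow 2
  -- diagonal (j = 0) vanishes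
  have hdiag : ∀ k, c k 0 = 0 := by
    intro k
    obtain ⟨_, _, hcol, _⟩ := hQLS k
    have := (hcol 0).2 (i := (1 : Fin n)) (j := (0 : Fin n)) (Ne.symm h01)
    rw [hc]; simp [this]
  -- disjoint supports from mutual orthogonality
  have hdisj : ∀ j, ∀ k l, k ≠ l → c k j * c l j = 0 := by
    intro j k l hkl
    obtain ⟨hon, _⟩ := hMO k l hkl
    have hp : ((0 : Fin n), (0 : Fin n)) ≠ ((1 : Fin n), j) := by
      intro h; exact h01 (congrArg Prod.fst h)
    have hT : (inner ℂ (tensorVec (Φ k 0 0) (Φ l 0 0)) (tensorVec (Φ k 1 j) (Φ l 1 j)) : ℂ) = 0 :=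
      hon.2 (i := ((0 : Fin n), (0 : Fin n))) (j := ((1 : Fin n), j)) hp
    rw [inner_tensorVec] at hT
    rcases mul_eq_zero.mp hT with h' | h'
    · have h'' : (inner ℂ (Φ k 1 j) (Φ k 0 0) : ℂ) = 0 := by
        rw [← inner_conj_symm, h', map_zero]
      have : c k j = 0 := by rw [hc]; simp [h'']
      rw [this, zero_mul]
    · have h'' : (inner ℂ (Φ l 1 j) (Φ l 0 0) : ℂ) = 0 := by
        rw [← inner_conj_symm, h', map_zero]
      have : c l j = 0 := by rw [hc]; simp [h'']
      rw [this, mul_zero]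
  -- counting
  have key : (m : ℝ) ≤ (n : ℝ) - 1 := by
    have h1 : (m : ℝ) = ∑ k : Fin m, ∑ j : Fin n, c k j := by
      simp [hrow]
    rw [h1, Finset.sum_comm]
    have h2 : ∀ j : Fin n, ∑ k, c k j ≤ if j = 0 then 0 else 1 := by
      intro j
      by_cases hj : j = 0
      · simp [hj, hdiag]
      · simp only [hj, if_false]
        exact sum_le_one_of_pairwise_mul_eq_zero (fun k => c k j)
          (fun k => hnonneg k j) (fun k => hle1 k j) (fun k l h => hdisj j k l h)
    calc ∑ j : Fin n, ∑ k, c k j ≤ ∑ j : Fin n, (if j = 0 then 0 else 1 : ℝ) :=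
          Finset.sum_le_sum (fun j _ => h2 j)
      _ = (n : ℝ) - 1 := by
          have he : ∑ j : Fin n, (if j = 0 then (0:ℝ) else 1)
              = ∑ j : Fin n, ((1:ℝ) - if j = 0 then 1 else 0) := by
            apply Finset.sum_congr rfl
            intro j _ ; by_cases h : j = 0 <;> simp [h]
          rw [he, Finset.sum_sub_distrib]
          simp [Finset.sum_ite_eq']
  have : (m : ℝ) ≤ ((n - 1 : ℕ) : ℝ) := by
    rw [Nat.cast_sub (by omega)]; simpa using key
  exact_mod_cast this
end
end
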